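/- arXiv:1408.5354 — 2 statements merged into one kernel-verified Lean document; each statement's English description precedes it below -/
import Mathlib

section
/- Let F : ℝⁿ ⇉ ℝⁿ have nonempty compact convex values and define H(x,p) = sup_{v ∈ F(x)} ⟨v,p⟩. Fix r > 0 and c ≥ 0. Then H(·,p) is semiconvex on B(0,r) with constant c·|p| for all p, i.e. 2H(x,p) ≤ H(x+z,p) + H(x−z,p) + c|z|²|p| whenever x±z ∈ B(0,r), if and only if F satisfies the mid-point property 2F(x) ⊆ F(x+z) + F(x−z) + c|z|²·B for all x, z with x±z ∈ B(0,r), where B is the closed unit ball. -/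
open RealInnerProductSpace Pointwise

/-- The support-function Hamiltonian of the set-valued map `F`. -/
noncomputable def ham {n : ℕ} (F : EuclideanSpace ℝ (Fin n) → Set (EuclideanSpace ℝ (Fin n)))
    (x p : EuclideanSpace ℝ (Fin n)) : ℝ :=
  sSup ((fun v => ⟪v, p⟫) '' F x)

theorem semiconvexity_iff_midpoint_property {n : ℕ}
    (F : EuclideanSpace ℝ (Fin n) → Set (EuclideanSpace ℝ (Fin n)))
    (hF : ∀ x, (F x).Nonempty ∧ IsCompact (F x) ∧ Convex ℝ (F x))
    (r : ℝ) (hr : 0 < r) (c : ℝ) (hc : 0 ≤ c) :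
    (∀ (x z p : EuclideanSpace ℝ (Fin n)), ‖x + z‖ ≤ r → ‖x - z‖ ≤ r →
        2 * ham F x p ≤ ham F (x + z) p + ham F (x - z) p + c * ‖z‖ ^ 2 * ‖p‖) ↔
      (∀ x z : EuclideanSpace ℝ (Fin n), ‖x + z‖ ≤ r → ‖x - z‖ ≤ r →
        (2 : ℝ) • F x ⊆ F (x + z) + F (x - z) +
          (c * ‖z‖ ^ 2) • Metric.closedBall (0 : EuclideanSpace ℝ (Fin n)) 1) := by
  have hcont : ∀ p : EuclideanSpace ℝ (Fin n),
      Continuous (fun v : EuclideanSpace ℝ (Fin n) => ⟪v, p⟫) :=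
    fun p => Continuous.inner continuous_id continuous_const
  have hbdd : ∀ (x p : EuclideanSpace ℝ (Fin n)), BddAbove ((fun v => ⟪v, p⟫) '' F x) :=
    fun x p => ((hF x).2.1.image (hcont p)).bddAbove
  have hle : ∀ (x p v : EuclideanSpace ℝ (Fin n)), v ∈ F x → ⟪v, p⟫ ≤ ham F x p :=
    fun x p v hv => le_csSup (hbdd x p) ⟨v, hv, rfl⟩
  -- sup is attained
  have hatt : ∀ (x p : EuclideanSpace ℝ (Fin n)), ∃ v ∈ F x, ham F x p = ⟪v, p⟫ := by
    intro x p
    obtain ⟨v, hv, hmax⟩ := (hF x).2.1.exists_isMaxOn (hF x).1 (hcont p).continuousOn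
    exact ⟨v, hv, le_antisymm (csSup_le ((hF x).1.image _)
      (by rintro y ⟨w, hw, rfl⟩; exact hmax hw)) (hle x p v hv)⟩
  constructor
  · -- ham inequality → inclusion
    intro h x z hxz hxz' w hw
    obtain ⟨v, hv, rfl⟩ := hw
    by_contra hnot
    set S : Set (EuclideanSpace ℝ (Fin n)) :=
      F (x + z) + F (x - z) + (c * ‖z‖ ^ 2) • Metric.closedBall (0 : EuclideanSpace ℝ (Fin n)) 1
      with hS
    have hScomp : IsCompact S :=
      (((hF (x+z)).2.1.add (hF (x-z)).2.1).add
        ((isCompact_closedBall (0 : EuclideanSpace ℝ (Fin n)) 1).smul (c * ‖z‖ ^ 2)))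
    have hSconv : Convex ℝ S :=
      (((hF (x+z)).2.2.add (hF (x-z)).2.2).add
        ((convex_closedBall (0 : EuclideanSpace ℝ (Fin n)) 1).smul (c * ‖z‖ ^ 2)))
    obtain ⟨f, u, hfu, hub⟩ := geometric_hahn_banach_point_closed hSconv hScomp.isClosed hnot
    set q : EuclideanSpace ℝ (Fin n) := -(InnerProductSpace.toDual ℝ _).symm f with hq
    have hfq : ∀ y : EuclideanSpace ℝ (Fin n), ⟪y, q⟫ = -(f y) := by
      intro y
      rw [hq, inner_neg_right, real_inner_comm, InnerProductSpace.toDual_symm_apply]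
    -- q ≠ 0 (else contradiction)
    have hq0 : q ≠ 0 := by
      intro h0
      have h1 : (0:ℝ) < u := by
        have := hfq ((2:ℝ) • v); rw [h0, inner_zero_right] at this; linarith
      obtain ⟨a, ha⟩ := (hF (x+z)).1
      obtain ⟨b, hb⟩ := (hF (x-z)).1
      have hmem : a + b + 0 ∈ S := by
        refine Set.add_mem_add (Set.add_mem_add ha hb) ?_
        exact ⟨0, Metric.mem_closedBall_self zero_le_one, smul_zero _⟩
      have := hub _ hmem
      have h2 := hfq (a + b + 0); rw [h0, inner_zero_right] at h2
      linarith
    -- all elements of S have ⟪·,q⟫ ≤ -u < ⟪2v,q⟫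
    have hSup : ∀ s ∈ S, ⟪s, q⟫ ≤ -u := fun s hs => by
      have := hub s hs; rw [hfq]; linarith
    have hvq : -u < ⟪(2:ℝ) • v, q⟫ := by rw [hfq]; linarith
    -- build an element of S attaining ham + ham + c‖z‖²‖q‖
    obtain ⟨a, ha, haq⟩ := hatt (x + z) q
    obtain ⟨b, hb, hbq⟩ := hatt (x - z) q
    set w : EuclideanSpace ℝ (Fin n) := (c * ‖z‖ ^ 2) • (‖q‖⁻¹ • q) with hw
    have hwmem : w ∈ (c * ‖z‖ ^ 2) • Metric.closedBall (0 : EuclideanSpace ℝ (Fin n)) 1 := by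
      refine ⟨‖q‖⁻¹ • q, ?_, rfl⟩
      rw [Metric.mem_closedBall, dist_zero_right, norm_smul, norm_inv, norm_norm,
        inv_mul_cancel₀ (norm_ne_zero_iff.2 hq0)]
    have hwq : ⟪w, q⟫ = c * ‖z‖ ^ 2 * ‖q‖ := by
      rw [hw, inner_smul_left, inner_smul_left, real_inner_self_eq_norm_sq]
      have : ‖q‖ ≠ 0 := norm_ne_zero_iff.2 hq0
      field_simp
      simp only [conj_trivial]; rw [mul_assoc, mul_one_div_cancel this, mul_one]
    have hmem : a + b + w ∈ S := Set.add_mem_add (Set.add_mem_add ha hb) hwmem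
    have hkey := hSup _ hmem
    rw [inner_add_left, inner_add_left, hwq] at hkey
    have h2v : ⟪(2:ℝ) • v, q⟫ = 2 * ⟪v, q⟫ := by rw [inner_smul_left]; norm_num
    have hmain := h x z q hxz hxz'
    have hv' := hle x q v hv
    rw [← haq, ← hbq] at hkey
    rw [h2v] at hvq
    linarith
  · -- inclusion → ham inequality
    intro h x z p hxz hxz'
    have key : ∀ v ∈ F x, 2 * ⟪v, p⟫ ≤
        ham F (x + z) p + ham F (x - z) p + c * ‖z‖ ^ 2 * ‖p‖ := by
      intro v hv
      have hmem : (2:ℝ) • v ∈ F (x + z) + F (x - z) +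
          (c * ‖z‖ ^ 2) • Metric.closedBall (0 : EuclideanSpace ℝ (Fin n)) 1 :=
        h x z hxz hxz' ⟨v, hv, rfl⟩
      obtain ⟨ab, hab, w, hwmem, hsum⟩ := hmem
      obtain ⟨a, ha, b, hb, rfl⟩ := hab
      obtain ⟨u, hu, rfl⟩ := hwmem
      have h1 : ⟪a, p⟫ ≤ ham F (x + z) p := hle _ _ _ ha
      have h2 : ⟪b, p⟫ ≤ ham F (x - z) p := hle _ _ _ hb
      have h3 : ⟪(c * ‖z‖ ^ 2) • u, p⟫ ≤ c * ‖z‖ ^ 2 * ‖p‖ := by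
        calc ⟪(c * ‖z‖ ^ 2) • u, p⟫ ≤ ‖(c * ‖z‖ ^ 2) • u‖ * ‖p‖ := real_inner_le_norm _ _
          _ ≤ c * ‖z‖ ^ 2 * ‖p‖ := by
              rw [norm_smul]
              have hu1 : ‖u‖ ≤ 1 := by
                rwa [Metric.mem_closedBall, dist_zero_right] at hu
              have : |c * ‖z‖ ^ 2| = c * ‖z‖ ^ 2 := abs_of_nonneg (by positivity)
              rw [Real.norm_eq_abs, this]
              have h4 : c * ‖z‖ ^ 2 * ‖u‖ ≤ c * ‖z‖ ^ 2 :=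
                mul_le_of_le_one_right (mul_nonneg hc (sq_nonneg ‖z‖)) hu1
              exact mul_le_mul_of_nonneg_right h4 (norm_nonneg p)
      have heq : ⟪a + b + (c * ‖z‖ ^ 2) • u, p⟫ = ⟪a, p⟫ + ⟪b, p⟫ + ⟪(c * ‖z‖ ^ 2) • u, p⟫ := by
        rw [inner_add_left, inner_add_left]
      have h2v : (2:ℝ) * ⟪v, p⟫ = ⟪(2:ℝ) • v, p⟫ := by rw [inner_smul_left]; norm_num
      rw [h2v, ← hsum, heq]
      linarith
    have : ham F x p ≤ (ham F (x + z) p + ham F (x - z) p + c * ‖z‖ ^ 2 * ‖p‖) / 2 :=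
      csSup_le ((hF x).1.image _) (by rintro y ⟨v, hv, rfl⟩; linarith [key v hv])
    linarith
end

section
/- Let A : [t₀,T] → M(n) and C, D : [t₀,T] → S(n) be continuous, with C(t) ≥ 0 (positive semidefinite) for all t. Let R : (t_c,T] → S(n) be a solution of Ṙ + A(t)*R + R A(t) + R C(t) R + D(t) = 0 with R(T) = R_T, and let Q : [t₀,T] → S(n) be the solution of the linear equation Q̇ + A(t)*Q + Q A(t) + D(t) = 0 with Q(T) = R_T. Then Q(t) ≤ R(t) in the sense of quadratic forms for all t ∈ (t_c,T]. -/
open Matrix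

attribute [local instance] Matrix.normedAddCommGroup Matrix.normedSpace

/-- quadratic form bound by entrywise sup norm -/
lemma quad_abs_le {n : ℕ} (M : Matrix (Fin n) (Fin n) ℝ) (x : Fin n → ℝ) (hx : ‖x‖ ≤ 1) :
    |x ⬝ᵥ (M *ᵥ x)| ≤ (n : ℝ)^2 * ‖M‖ := by
  have hxi : ∀ i, |x i| ≤ 1 := fun i => by
    have := norm_le_pi_norm x i
    rw [Real.norm_eq_abs] at this; linarith
  have hM : ∀ i j, |M i j| ≤ ‖M‖ := fun i j => by
    simpa [Real.norm_eq_abs] using M.norm_entry_le_entrywise_sup_norm (i := i) (j := j)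
  have hMnn : 0 ≤ ‖M‖ := norm_nonneg M
  have hrw : x ⬝ᵥ (M *ᵥ x) = ∑ i, ∑ j, x i * (M i j * x j) := by
    simp [dotProduct, Matrix.mulVec, Finset.mul_sum]
  rw [hrw]
  calc |∑ i, ∑ j, x i * (M i j * x j)| ≤ ∑ i, |∑ j, x i * (M i j * x j)| :=
        Finset.abs_sum_le_sum_abs _ _
    _ ≤ ∑ _i : Fin n, ∑ _j : Fin n, ‖M‖ := by
        refine Finset.sum_le_sum fun i _ => ?_
        calc |∑ j, x i * (M i j * x j)| ≤ ∑ j, |x i * (M i j * x j)| :=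
              Finset.abs_sum_le_sum_abs _ _
          _ ≤ ∑ _j : Fin n, ‖M‖ := by
              refine Finset.sum_le_sum fun j _ => ?_
              rw [abs_mul, abs_mul]
              calc |x i| * (|M i j| * |x j|) ≤ 1 * (‖M‖ * 1) := by
                    apply mul_le_mul (hxi i) _ (by positivity) zero_le_one
                    exact mul_le_mul (hM i j) (hxi j) (abs_nonneg _) hMnn
                _ = ‖M‖ := by ring
    _ = (n : ℝ)^2 * ‖M‖ := by
        simp [Finset.sum_const, Finset.card_univ]; ring

lemma psd_of_unit {n : ℕ} {M : Matrix (Fin n) (Fin n) ℝ} (hsym : M.IsSymm)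
    (h : ∀ x : Fin n → ℝ, ‖x‖ = 1 → 0 ≤ x ⬝ᵥ (M *ᵥ x)) : M.PosSemidef := by
  apply Matrix.PosSemidef.of_dotProduct_mulVec_nonneg
  · rwa [Matrix.IsHermitian, Matrix.conjTranspose_eq_transpose_of_trivial]
  · intro x
    rw [show star x = x from star_trivial x]
    rcases eq_or_ne x 0 with rfl | hx0
    · simp
    · have hnx : 0 < ‖x‖ := norm_pos_iff.mpr hx0
      set u : Fin n → ℝ := ‖x‖⁻¹ • x with hu
      have hun : ‖u‖ = 1 := by
        rw [hu, norm_smul, norm_inv, norm_norm, inv_mul_cancel₀ hnx.ne']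
      have hxu : x = ‖x‖ • u := by
        rw [hu, smul_smul, mul_inv_cancel₀ hnx.ne', one_smul]
      have h0 := h u hun
      rw [hxu]
      rw [Matrix.mulVec_smul, smul_dotProduct, dotProduct_smul, smul_eq_mul,
        smul_eq_mul]
      positivity

lemma psd_kernel {n : ℕ} {M : Matrix (Fin n) (Fin n) ℝ} (hM : M.PosSemidef)
    {x : Fin n → ℝ} (h : x ⬝ᵥ (M *ᵥ x) = 0) : M *ᵥ x = 0 := by
  have hsym : Mᵀ = M := by
    have := hM.1
    rwa [Matrix.IsHermitian, Matrix.conjTranspose_eq_transpose_of_trivial] at this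
  set y : Fin n → ℝ := M *ᵥ x with hy
  have hswap : ∀ v w : Fin n → ℝ, v ⬝ᵥ (M *ᵥ w) = (M *ᵥ v) ⬝ᵥ w := by
    intro v w
    rw [Matrix.dotProduct_mulVec, ← Matrix.vecMul_transpose, hsym]
  have key : ∀ t : ℝ, 0 ≤ t^2 * (y ⬝ᵥ (M *ᵥ y)) + 2 * t * (y ⬝ᵥ y) := by
    intro t
    have h0 := hM.dotProduct_mulVec_nonneg (x + t • y)
    rw [show star (x + t • y) = x + t • y from star_trivial _] at h0
    rw [Matrix.mulVec_add, Matrix.mulVec_smul, dotProduct_add, add_dotProduct,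
      add_dotProduct, dotProduct_smul, smul_dotProduct,
      smul_dotProduct, dotProduct_smul] at h0
    have e1 : x ⬝ᵥ (M *ᵥ y) = y ⬝ᵥ y := by rw [hswap x y]
    have e2 : y ⬝ᵥ (M *ᵥ x) = y ⬝ᵥ y := rfl
    simp only [smul_eq_mul] at h0
    rw [e1] at h0
    nlinarith [h0, h]
  have ha : 0 ≤ y ⬝ᵥ (M *ᵥ y) := by
    have := hM.dotProduct_mulVec_nonneg y
    rwa [show star y = y from star_trivial _] at this
  have hb : 0 ≤ y ⬝ᵥ y := by
    have : y ⬝ᵥ y = ∑ i, y i * y i := rfl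
    rw [this]; exact Finset.sum_nonneg fun i _ => mul_self_nonneg _
  set a := y ⬝ᵥ (M *ᵥ y)
  set b := y ⬝ᵥ y
  have hb0 : b = 0 := by
    by_contra hb0
    have hbpos : 0 < b := lt_of_le_of_ne hb (Ne.symm hb0)
    have ha1 : (0:ℝ) < a + 1 := by linarith
    have := key (-(b / (a + 1)))
    have hbb : b / (a+1) * (a+1) = b := div_mul_cancel₀ _ ha1.ne'
    nlinarith [this, sq_nonneg (b/(a+1)), mul_pos hbpos hbpos]
  have : y ⬝ᵥ y = 0 := hb0
  exact dotProduct_self_eq_zero.mp this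

lemma one_le_dot {n : ℕ} [Nonempty (Fin n)] {x : Fin n → ℝ} (hx : ‖x‖ = 1) :
    1 ≤ x ⬝ᵥ x := by
  obtain ⟨i, _, hi⟩ := Finset.exists_mem_eq_sup (Finset.univ : Finset (Fin n))
    Finset.univ_nonempty (fun i => ‖x i‖₊)
  have hnn : ‖x‖₊ = ‖x i‖₊ := by rw [Pi.nnnorm_def, hi]
  have h1 : |x i| = 1 := by
    have : ‖x i‖ = 1 := by
      have := congrArg (fun p : NNReal => (p : ℝ)) hnn
      simpa [hx] using this.symm
    rwa [Real.norm_eq_abs] at this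
  have : x ⬝ᵥ x = ∑ j, x j * x j := rfl
  rw [this]
  calc (1:ℝ) = x i * x i := by nlinarith [h1, sq_abs (x i)]
    _ ≤ ∑ j, x j * x j :=
        Finset.single_le_sum (fun j _ => mul_self_nonneg (x j)) (Finset.mem_univ i)

lemma dot_le_card {n : ℕ} {x : Fin n → ℝ} (hx : ‖x‖ = 1) : x ⬝ᵥ x ≤ (n : ℝ) := by
  have hxi : ∀ i, |x i| ≤ 1 := fun i => by
    have := norm_le_pi_norm x i
    rw [Real.norm_eq_abs] at this; linarith [this, hx]
  have : x ⬝ᵥ x = ∑ j, x j * x j := rfl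
  rw [this]
  calc ∑ j, x j * x j ≤ ∑ _j : Fin n, (1:ℝ) := by
        refine Finset.sum_le_sum fun j _ => ?_
        nlinarith [hxi j, abs_nonneg (x j), sq_abs (x j)]
    _ = n := by simp

set_option maxHeartbeats 1600000 in
theorem riccati_comparison_linear {n : ℕ} (t₀ tc T : ℝ) (ht₀ : t₀ ≤ tc) (htc : tc < T)
    (A C D R Q : ℝ → Matrix (Fin n) (Fin n) ℝ)
    (hA : ContinuousOn A (Set.Icc t₀ T))
    (hC : ContinuousOn C (Set.Icc t₀ T)) (hCpos : ∀ t ∈ Set.Icc t₀ T, (C t).PosSemidef)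
    (hD : ContinuousOn D (Set.Icc t₀ T)) (hDsymm : ∀ t ∈ Set.Icc t₀ T, (D t).IsSymm)
    (RT : Matrix (Fin n) (Fin n) ℝ) (hRT : RT.IsSymm)
    (hRsymm : ∀ t ∈ Set.Ioc tc T, (R t).IsSymm)
    (hR : ∀ t ∈ Set.Ioc tc T, HasDerivAt R
      (-((A t)ᵀ * R t) - R t * A t - R t * C t * R t - D t) t)
    (hRfin : R T = RT)
    (hQsymm : ∀ t ∈ Set.Icc t₀ T, (Q t).IsSymm)
    (hQ : ∀ t ∈ Set.Icc t₀ T, HasDerivAt Q (-((A t)ᵀ * Q t) - Q t * A t - D t) t)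
    (hQfin : Q T = RT) :
    ∀ t ∈ Set.Ioc tc T, (R t - Q t).PosSemidef := by
  intro t₁ ht₁
  have htct₁ : tc < t₁ := ht₁.1
  have ht₁T : t₁ ≤ T := ht₁.2
  have hsub : Set.Icc t₁ T ⊆ Set.Ioc tc T := fun s hs => ⟨lt_of_lt_of_le htct₁ hs.1, hs.2⟩
  have hsubQ : Set.Icc t₁ T ⊆ Set.Icc t₀ T :=
    fun s hs => ⟨le_trans (le_trans ht₀ htct₁.le) hs.1, hs.2⟩
  have hΔsymm : ∀ s ∈ Set.Ioc tc T, (R s - Q s).IsSymm := fun s hs =>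
    (hRsymm s hs).sub (hQsymm s ⟨le_trans ht₀ hs.1.le, hs.2⟩)
  apply psd_of_unit (hΔsymm t₁ ht₁)
  rcases Nat.eq_zero_or_pos n with hn | hn
  · subst hn
    intro x hx
    simp [dotProduct]
  intro x hx
  haveI : Nonempty (Fin n) := ⟨⟨0, hn⟩⟩
  obtain ⟨K₀, hK₀⟩ := (isCompact_Icc : IsCompact (Set.Icc t₀ T)).exists_bound_of_continuousOn hA
  set K : ℝ := max K₀ 0 with hKdef
  have hK : ∀ s ∈ Set.Icc t₀ T, ‖A s‖ ≤ K := fun s hs => le_trans (hK₀ s hs) (le_max_left _ _)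
  have hK0 : 0 ≤ K := le_max_right _ _
  set c : ℝ := 2 * (n : ℝ) ^ 2 * K + 1 with hcdef
  have hcpos : 0 < c := by positivity
  by_contra hneg
  push_neg at hneg
  have hE₁ : (0:ℝ) < Real.exp (c * (T - t₁)) := Real.exp_pos _
  set ε : ℝ := -(x ⬝ᵥ ((R t₁ - Q t₁) *ᵥ x)) / (Real.exp (c * (T - t₁)) * ((n : ℝ) + 1))
    with hεdef
  have hεpos : 0 < ε := div_pos (by linarith) (by positivity)
  set P : ℝ → Matrix (Fin n) (Fin n) ℝ :=
    fun t => R t - Q t + (ε * Real.exp (c * (T - t))) • 1 with hPdef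
  have hecont : Continuous (fun t : ℝ => ε * Real.exp (c * (T - t))) := by continuity
  have hPca : ∀ s ∈ Set.Ioc tc T, ContinuousAt P s := by
    intro s hs
    have h1 : ContinuousAt R s := (hR s hs).continuousAt
    have h2 : ContinuousAt Q s := (hQ s ⟨le_trans ht₀ hs.1.le, hs.2⟩).continuousAt
    exact (h1.sub h2).add (hecont.continuousAt.smul continuousAt_const)
  have claim : ∀ s ∈ Set.Icc t₁ T, ∀ y : Fin n → ℝ, ‖y‖ = 1 → 0 < y ⬝ᵥ (P s *ᵥ y) := by
    by_contra hcl
    push_neg at hcl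
    obtain ⟨s₀, hs₀, y₀, hy₀, hfy₀⟩ := hcl
    have hy₀S : y₀ ∈ Metric.sphere (0 : Fin n → ℝ) 1 := mem_sphere_zero_iff_norm.mpr hy₀
    set Kset : Set (ℝ × (Fin n → ℝ)) := Set.Icc t₁ T ×ˢ Metric.sphere (0 : Fin n → ℝ) 1
      with hKsetdef
    have hKc : IsCompact Kset := isCompact_Icc.prod (isCompact_sphere _ _)
    haveI : CompactSpace Kset := isCompact_iff_compactSpace.mp hKc
    have h1K : Continuous (fun p : Kset => P (p : ℝ × (Fin n → ℝ)).1) := by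
      rw [continuous_iff_continuousAt]
      intro p
      have hf : Continuous (fun q : Kset => (q : ℝ × (Fin n → ℝ)).1) :=
        continuous_subtype_val.fst
      exact ContinuousAt.comp (g := P) (f := fun q : Kset => (q : ℝ × (Fin n → ℝ)).1)
        (x := p) (hPca _ (hsub (Set.mem_prod.mp p.2).1)) hf.continuousAt
    have h2K : Continuous (fun p : Kset => (p : ℝ × (Fin n → ℝ)).2) :=
      continuous_snd.comp continuous_subtype_val
    have hFc : Continuous (fun p : Kset =>
        (p : ℝ × (Fin n → ℝ)).2 ⬝ᵥ (P (p : ℝ × (Fin n → ℝ)).1 *ᵥ (p : ℝ × (Fin n → ℝ)).2)) :=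
      h2K.dotProduct (h1K.matrix_mulVec h2K)
    set Cset : Set (ℝ × (Fin n → ℝ)) :=
      {p | p ∈ Kset ∧ p.2 ⬝ᵥ (P p.1 *ᵥ p.2) ≤ 0} with hCsetdef
    have hCc : IsCompact Cset := by
      have h3 : Cset = Subtype.val '' {p : Kset |
          (p : ℝ × (Fin n → ℝ)).2 ⬝ᵥ (P (p : ℝ × (Fin n → ℝ)).1 *ᵥ (p : ℝ × (Fin n → ℝ)).2) ≤ 0} := by
        ext p
        constructor
        · rintro ⟨hpK, hple⟩
          exact ⟨⟨p, hpK⟩, hple, rfl⟩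
        · rintro ⟨⟨p', hp'⟩, hle, rfl⟩
          exact ⟨hp', hle⟩
      rw [h3]
      exact ((isClosed_le hFc continuous_const).isCompact).image continuous_subtype_val
    set B : Set ℝ := Prod.fst '' Cset with hBdef
    have hBc : IsCompact B := hCc.image continuous_fst
    have hBne : B.Nonempty := ⟨s₀, ⟨(s₀, y₀), ⟨Set.mem_prod.mpr ⟨hs₀, hy₀S⟩, hfy₀⟩, rfl⟩⟩
    have hBsub : B ⊆ Set.Icc t₁ T := by
      rintro s ⟨p, ⟨hpK, _⟩, rfl⟩
      exact (Set.mem_prod.mp hpK).1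
    have htsB := hBc.sSup_mem hBne
    obtain ⟨⟨s', xs⟩, ⟨hpK, hple⟩, hfst⟩ := htsB
    have hs'Icc : s' ∈ Set.Icc t₁ T := (Set.mem_prod.mp hpK).1
    have hxsS : xs ∈ Metric.sphere (0 : Fin n → ℝ) 1 := (Set.mem_prod.mp hpK).2
    have hxsnorm : ‖xs‖ = 1 := mem_sphere_zero_iff_norm.mp hxsS
    have hxx1 : 1 ≤ xs ⬝ᵥ xs := one_le_dot hxsnorm
    have hs'T : s' < T := by
      rcases lt_or_eq_of_le hs'Icc.2 with h | h
      · exact h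
      · exfalso
        rw [h] at hple
        have h0 : R T - Q T = 0 := by rw [hRfin, hQfin, sub_self]
        have hPT : xs ⬝ᵥ (P T *ᵥ xs) = ε * (xs ⬝ᵥ xs) := by
          simp [hPdef, h0, Matrix.add_mulVec, Matrix.smul_mulVec, Matrix.one_mulVec,
            dotProduct_add, dotProduct_smul, smul_eq_mul, Matrix.zero_mulVec,
            dotProduct_zero]
        rw [hPT] at hple
        nlinarith [hεpos, hxx1, hple]
    have hub : ∀ s ∈ Set.Ioc s' T, ∀ y : Fin n → ℝ, ‖y‖ = 1 → 0 < y ⬝ᵥ (P s *ᵥ y) := by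
      intro s hs y hy
      by_contra hle
      push_neg at hle
      have hsB : s ∈ B := ⟨(s, y), ⟨Set.mem_prod.mpr
        ⟨⟨le_trans hs'Icc.1 hs.1.le, hs.2⟩, mem_sphere_zero_iff_norm.mpr hy⟩, hle⟩, rfl⟩
      have hles : s ≤ sSup B := le_csSup hBc.bddAbove hsB
      rw [← hfst] at hles
      exact absurd hs.1 (not_lt.mpr hles)
    have houter : ∀ y : Fin n → ℝ, Continuous (fun M : Matrix (Fin n) (Fin n) ℝ => y ⬝ᵥ (M *ᵥ y)) :=
      fun y => continuous_const.dotProduct (continuous_id.matrix_mulVec continuous_const)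
    have hpsd0 : ∀ y : Fin n → ℝ, ‖y‖ = 1 → 0 ≤ y ⬝ᵥ (P s' *ᵥ y) := by
      intro y hy
      have hca : ContinuousAt (fun s => y ⬝ᵥ (P s *ᵥ y)) s' :=
        ((houter y).continuousAt).comp (hPca s' (hsub hs'Icc))
      have htd : Filter.Tendsto (fun s => y ⬝ᵥ (P s *ᵥ y)) (nhdsWithin s' (Set.Ioi s'))
          (nhds (y ⬝ᵥ (P s' *ᵥ y))) := hca.tendsto.mono_left nhdsWithin_le_nhds
      refine ge_of_tendsto htd ?_
      filter_upwards [Ioc_mem_nhdsGT hs'T] with s hs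
      exact (hub s hs y hy).le
    have hPsymm : (P s').IsSymm :=
      (hΔsymm s' (hsub hs'Icc)).add ((Matrix.isSymm_one).smul _)
    have hPpsd : (P s').PosSemidef := psd_of_unit hPsymm hpsd0
    have hq0 : xs ⬝ᵥ (P s' *ᵥ xs) = 0 := le_antisymm hple (hpsd0 xs hxsnorm)
    have hker : P s' *ᵥ xs = 0 := psd_kernel hPpsd hq0
    set E : ℝ := Real.exp (c * (T - s')) with hEdef
    have hEpos : 0 < E := Real.exp_pos _
    have hΔx : (R s' - Q s') *ᵥ xs = (-(ε * E)) • xs := by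
      have h1 : P s' *ᵥ xs = (R s' - Q s') *ᵥ xs + (ε * E) • xs := by
        simp [hPdef, Matrix.add_mulVec, Matrix.smul_mulVec, Matrix.one_mulVec, hEdef]
      rw [h1] at hker
      have := eq_neg_of_add_eq_zero_left hker
      rw [this, neg_smul]
    have hs'mem : s' ∈ Set.Ioc tc T := hsub hs'Icc
    have hs'memQ : s' ∈ Set.Icc t₀ T := hsubQ hs'Icc
    have hexp : HasDerivAt (fun t : ℝ => ε * Real.exp (c * (T - t))) (-(c * (ε * E))) s' := by
      have h1 : HasDerivAt (fun t : ℝ => c * (T - t)) (c * (-1)) s' :=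
        ((hasDerivAt_id s').const_sub T).const_mul c
      have h2 := (h1.exp).const_mul ε
      have h3 : -(c * (ε * E)) = ε * (Real.exp (c * (T - s')) * (c * -1)) := by
        rw [hEdef]; ring
      rw [h3]; exact h2
    set DP : Matrix (Fin n) (Fin n) ℝ :=
      (-((A s')ᵀ * R s') - R s' * A s' - R s' * C s' * R s' - D s'
        - (-((A s')ᵀ * Q s') - Q s' * A s' - D s')) + (-(c * (ε * E))) • 1 with hDPdef
    have hPd : HasDerivAt P DP s' :=
      ((hR s' hs'mem).sub (hQ s' hs'memQ)).add (hexp.smul_const 1)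
    set L : Matrix (Fin n) (Fin n) ℝ →ₗ[ℝ] ℝ :=
      { toFun := fun M => xs ⬝ᵥ (M *ᵥ xs),
        map_add' := fun M N => by simp [Matrix.add_mulVec, dotProduct_add],
        map_smul' := fun a M => by
          simp [Matrix.smul_mulVec, dotProduct_smul] } with hLdef
    have hgd : HasDerivAt (fun s => xs ⬝ᵥ (P s *ᵥ xs)) (xs ⬝ᵥ (DP *ᵥ xs)) s' := by
      exact (LinearMap.toContinuousLinearMap L).hasFDerivAt.comp_hasDerivAt s' hPd
    -- compute the derivative value
    have hmat : (-((A s')ᵀ * R s') - R s' * A s' - R s' * C s' * R s' - D s'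
        - (-((A s')ᵀ * Q s') - Q s' * A s' - D s'))
        = -((A s')ᵀ * (R s' - Q s')) - (R s' - Q s') * A s' - R s' * C s' * R s' := by
      noncomm_ring
    have hRsymm' : (R s')ᵀ = R s' := hRsymm s' hs'mem
    have hΔsymm' : (R s' - Q s')ᵀ = R s' - Q s' := hΔsymm s' hs'mem
    have hswapΔ : ∀ w : Fin n → ℝ, xs ⬝ᵥ ((R s' - Q s') *ᵥ w) = ((R s' - Q s') *ᵥ xs) ⬝ᵥ w := by
      intro w
      rw [Matrix.dotProduct_mulVec, ← Matrix.vecMul_transpose, hΔsymm']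
    have hswapR : ∀ w : Fin n → ℝ, xs ⬝ᵥ (R s' *ᵥ w) = (R s' *ᵥ xs) ⬝ᵥ w := by
      intro w
      rw [Matrix.dotProduct_mulVec, ← Matrix.vecMul_transpose, hRsymm']
    set α : ℝ := xs ⬝ᵥ (A s' *ᵥ xs) with hαdef
    have hα : |α| ≤ (n : ℝ) ^ 2 * K := by
      refine le_trans (quad_abs_le _ _ (le_of_eq hxsnorm)) ?_
      exact mul_le_mul_of_nonneg_left (hK s' hs'memQ) (by positivity)
    have hT1 : xs ⬝ᵥ (((A s')ᵀ * (R s' - Q s')) *ᵥ xs) = -(ε * E) * α := by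
      rw [← Matrix.mulVec_mulVec, hΔx, Matrix.mulVec_smul, dotProduct_smul, smul_eq_mul]
      congr 1
      rw [Matrix.mulVec_transpose, dotProduct_comm, ← Matrix.dotProduct_mulVec]
    have hT2 : xs ⬝ᵥ (((R s' - Q s') * A s') *ᵥ xs) = -(ε * E) * α := by
      rw [← Matrix.mulVec_mulVec, hswapΔ, hΔx, smul_dotProduct, smul_eq_mul, hαdef]
    have hT3 : xs ⬝ᵥ ((R s' * C s' * R s') *ᵥ xs)
        = (R s' *ᵥ xs) ⬝ᵥ (C s' *ᵥ (R s' *ᵥ xs)) := by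
      rw [← Matrix.mulVec_mulVec, ← Matrix.mulVec_mulVec, hswapR]
    have hT3nn : 0 ≤ (R s' *ᵥ xs) ⬝ᵥ (C s' *ᵥ (R s' *ᵥ xs)) := by
      have := (hCpos s' hs'memQ).dotProduct_mulVec_nonneg (R s' *ᵥ xs)
      rwa [star_trivial] at this
    have hdval : xs ⬝ᵥ (DP *ᵥ xs)
        = -(xs ⬝ᵥ (((A s')ᵀ * (R s' - Q s')) *ᵥ xs)) - xs ⬝ᵥ (((R s' - Q s') * A s') *ᵥ xs)
          - xs ⬝ᵥ ((R s' * C s' * R s') *ᵥ xs) - (c * (ε * E)) * (xs ⬝ᵥ xs) := by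
      have h0 : DP = (-((A s')ᵀ * (R s' - Q s')) - (R s' - Q s') * A s' - R s' * C s' * R s')
          + (-(c * (ε * E))) • (1 : Matrix (Fin n) (Fin n) ℝ) := by rw [hDPdef, hmat]
      have h1 : ∀ M : Matrix (Fin n) (Fin n) ℝ, L M = xs ⬝ᵥ (M *ᵥ xs) := fun M => rfl
      have h2 : xs ⬝ᵥ (DP *ᵥ xs) = L DP := rfl
      rw [h2, h0, map_add, map_sub, map_sub, map_neg, _root_.map_smul, smul_eq_mul]
      rw [h1, h1, h1, h1, Matrix.one_mulVec]
      ring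
    have hdneg : xs ⬝ᵥ (DP *ᵥ xs) < 0 := by
      rw [hdval, hT1, hT2, hT3]
      have hεE : 0 < ε * E := mul_pos hεpos hEpos
      have habs2 : ε * E * α ≤ ε * E * ((n:ℝ)^2 * K) := by
        nlinarith [abs_le.mp hα, hεE]
      have hcx : c * (ε * E) * 1 ≤ c * (ε * E) * (xs ⬝ᵥ xs) := by
        nlinarith [hxx1, mul_pos hcpos hεE]
      have hceq : c * (ε * E) = 2 * (n:ℝ)^2 * K * (ε * E) + (ε * E) := by
        rw [hcdef]; ring
      nlinarith [hT3nn, habs2, hεE, hcx, hceq]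
    -- contradiction with g > 0 on the right and g s' = 0
    have hg0 : xs ⬝ᵥ (P s' *ᵥ xs) = 0 := hq0
    have hslope := hasDerivAt_iff_tendsto_slope.mp hgd
    have hmono : nhdsWithin s' (Set.Ioi s') ≤ nhdsWithin s' {s'}ᶜ :=
      nhdsWithin_mono s' (fun z hz => ne_of_gt hz)
    have hev : ∀ᶠ z in nhdsWithin s' (Set.Ioi s'),
        slope (fun s => xs ⬝ᵥ (P s *ᵥ xs)) s' z < 0 :=
      (hslope.mono_left hmono).eventually_lt_const hdneg
    have hev2 : ∀ᶠ z in nhdsWithin s' (Set.Ioi s'), z ∈ Set.Ioc s' T :=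
      Filter.eventually_of_mem (Ioc_mem_nhdsGT hs'T) (fun z hz => hz)
    obtain ⟨z, hz1, hz2⟩ := (hev.and hev2).exists
    have hzpos : 0 < xs ⬝ᵥ (P z *ᵥ xs) := hub z hz2 xs hxsnorm
    rw [slope_def_field, hg0, sub_zero] at hz1
    have hzgt : 0 < z - s' := sub_pos.mpr hz2.1
    have : xs ⬝ᵥ (P z *ᵥ xs) < 0 := by
      have := (div_neg_iff.mp hz1)
      rcases this with ⟨h1, h2⟩ | ⟨h1, h2⟩
      · linarith
      · linarith
    linarith
  -- use the claim at t₁ with x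
  have h1 := claim t₁ ⟨le_refl t₁, ht₁T⟩ x hx
  have hPq : x ⬝ᵥ (P t₁ *ᵥ x)
      = x ⬝ᵥ ((R t₁ - Q t₁) *ᵥ x) + (ε * Real.exp (c * (T - t₁))) * (x ⬝ᵥ x) := by
    simp [hPdef, Matrix.add_mulVec, Matrix.smul_mulVec, Matrix.one_mulVec,
      dotProduct_add, dotProduct_smul, smul_eq_mul]
  rw [hPq] at h1
  have hxxn : x ⬝ᵥ x ≤ (n : ℝ) := dot_le_card hx
  have hxx0 : 0 ≤ x ⬝ᵥ x := by
    have : x ⬝ᵥ x = ∑ j, x j * x j := rfl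
    rw [this]; exact Finset.sum_nonneg fun i _ => mul_self_nonneg _
  have hεE : ε * Real.exp (c * (T - t₁)) * ((n : ℝ) + 1) = -(x ⬝ᵥ ((R t₁ - Q t₁) *ᵥ x)) := by
    rw [hεdef]
    field_simp
  have hβ : 0 < ε * Real.exp (c * (T - t₁)) := mul_pos hεpos hE₁
  nlinarith [h1, hneg, hεE, hβ, mul_nonneg hβ.le (sub_nonneg.mpr hxxn)]
end
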